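/- Let K be a triangulated category with translation T and let D be a set of generators of K, i.e. K is the smallest thick subcategory of K containing D. If α ∈ End(K) is such that α_d is nilpotent for every d ∈ D, then α is pointwise nilpotent, i.e. α_a is nilpotent for every object a ∈ K. -/

import Mathlib

namespace Balmer

open CategoryTheory CategoryTheory.Limits CategoryTheory.Pretriangulated ZeroObject

universe v u v' u'

/-- An endomorphism of the identity functor of `K` which commutes with the
translation: a family of endomorphisms `α_a : a ⟶ a`, natural in `a`, with
`α_{T(a)} = T(α_a)`. -/
structure TriEnd (K : Type u) [Category.{v} K] [HasShift K ℤ] where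
  app : ∀ a : K, a ⟶ a
  natural : ∀ {a b : K} (f : a ⟶ b), f ≫ app b = app a ≫ f
  shift : ∀ a : K, app ((shiftFunctor K (1 : ℤ)).obj a) = (shiftFunctor K (1 : ℤ)).map (app a)

variable {K : Type u} [Category.{v} K] [HasShift K ℤ]

/-- The `n`-fold composition of an endomorphism with itself. -/
def endPow {a : K} (f : a ⟶ a) : ℕ → (a ⟶ a)
  | 0 => 𝟙 a
  | (n + 1) => endPow f n ≫ f

/-- An endomorphism `f : a ⟶ a` is nilpotent if `f^n = 0` for some `n ≥ 1`. -/
def IsNilpotentHom [Preadditive K] {a : K} (f : a ⟶ a) : Prop :=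
  ∃ n : ℕ, endPow f (n + 1) = 0

/-- Multiplication (composition) in `End(K)`. -/
def TriEnd.mul (α β : TriEnd K) : TriEnd K where
  app a := α.app a ≫ β.app a
  natural {a b} f := by
    try dsimp only
    rw [← Category.assoc, α.natural f, Category.assoc, β.natural f, ← Category.assoc]
  shift a := by
    try dsimp only
    rw [α.shift a, β.shift a, ← Functor.map_comp]

/-- The unit of `End(K)`. -/
def TriEnd.one : TriEnd K where
  app a := 𝟙 a
  natural {a b} f := by (try dsimp only); rw [Category.comp_id, Category.id_comp]
  shift a := by (try dsimp only); rw [CategoryTheory.Functor.map_id]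

/-- Addition in `End(K)`. -/
def TriEnd.add [Preadditive K] [∀ n : ℤ, (shiftFunctor K n).Additive]
    (α β : TriEnd K) : TriEnd K where
  app a := α.app a + β.app a
  natural {a b} f := by
    try dsimp only
    rw [Preadditive.comp_add, Preadditive.add_comp, α.natural f, β.natural f]
  shift a := by
    try dsimp only
    rw [Functor.map_add, α.shift a, β.shift a]

/-- `α ∈ End(K)` is pointwise nilpotent if each `α_a` is a nilpotent endomorphism. -/
def TriEnd.PNilpotent [Preadditive K] (α : TriEnd K) : Prop :=
  ∀ a : K, IsNilpotentHom (α.app a)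

/-- A thick subcategory of `K` (identified with its set of objects): a full
triangulated subcategory closed under isomorphisms, translations, cones and direct
summands. -/
def IsThick [Preadditive K] [HasZeroObject K] [∀ n : ℤ, (shiftFunctor K n).Additive]
    [Pretriangulated K] [HasBinaryBiproducts K] (S : Set K) : Prop :=
  (0 : K) ∈ S ∧
  (∀ ⦃a b : K⦄, (a ≅ b) → a ∈ S → b ∈ S) ∧
  (∀ a ∈ S, ∀ n : ℤ, (shiftFunctor K n).obj a ∈ S) ∧
  (∀ T ∈ (distTriang K), T.obj₁ ∈ S → T.obj₂ ∈ S → T.obj₃ ∈ S) ∧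
  (∀ a b : K, (a ⊞ b) ∈ S → a ∈ S ∧ b ∈ S)

/-- The smallest thick subcategory of `K` containing `D`. -/
def thickSpan [Preadditive K] [HasZeroObject K] [∀ n : ℤ, (shiftFunctor K n).Additive]
    [Pretriangulated K] [HasBinaryBiproducts K] (D : Set K) : Set K :=
  ⋂₀ {S : Set K | IsThick S ∧ D ⊆ S}

lemma endPow_conj {a b : K} (u : a ⟶ b) (f : a ⟶ a) (g : b ⟶ b)
    (h : u ≫ g = f ≫ u) : ∀ n : ℕ, u ≫ endPow g n = endPow f n ≫ u
  | 0 => by simp [endPow]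
  | (n + 1) => by
    rw [endPow, endPow, ← Category.assoc, endPow_conj u f g h n, Category.assoc, h,
      ← Category.assoc]

lemma endPow_map {L : Type u'} [Category.{v'} L] (F : K ⥤ L) {a : K} (f : a ⟶ a) :
    ∀ n : ℕ, F.map (endPow f n) = endPow (F.map f) n
  | 0 => by simp [endPow]
  | (n + 1) => by rw [endPow, endPow, F.map_comp, endPow_map F f n]

lemma isNilpotentHom_of_iso [Preadditive K] {a b : K} (e : a ≅ b) (f : a ⟶ a) (g : b ⟶ b)
    (h : e.hom ≫ g = f ≫ e.hom) (hf : IsNilpotentHom f) : IsNilpotentHom g := by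
  obtain ⟨n, hn⟩ := hf
  refine ⟨n, ?_⟩
  have := endPow_conj e.hom f g h (n + 1)
  rw [hn, zero_comp] at this
  calc endPow g (n + 1) = e.inv ≫ (e.hom ≫ endPow g (n + 1)) := by simp
    _ = 0 := by rw [this, comp_zero]

lemma shift1_nilpotent [Preadditive K] [∀ n : ℤ, (shiftFunctor K n).Additive]
    (α : TriEnd K) (a : K) :
    IsNilpotentHom (α.app a) ↔ IsNilpotentHom (α.app ((shiftFunctor K (1 : ℤ)).obj a)) := by
  constructor
  · rintro ⟨n, hn⟩
    exact ⟨n, by rw [α.shift, ← endPow_map, hn, Functor.map_zero]⟩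
  · rintro ⟨n, hn⟩
    refine ⟨n, (shiftFunctor K (1 : ℤ)).map_injective ?_⟩
    rw [Functor.map_zero, endPow_map, ← α.shift, hn]

/-- Proposition 6.3: if `D` generates `K` as a thick subcategory and
`α ∈ End(K)` is nilpotent on every object of `D`, then `α` is pointwise nilpotent. -/
theorem stmt14 [Preadditive K] [HasZeroObject K] [∀ n : ℤ, (shiftFunctor K n).Additive]
    [Pretriangulated K] [HasBinaryBiproducts K]
    (D : Set K) (hD : thickSpan D = Set.univ)
    (α : TriEnd K) (hnil : ∀ d ∈ D, IsNilpotentHom (α.app d)) :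
    α.PNilpotent := by
  set S : Set K := {a : K | IsNilpotentHom (α.app a)} with hS
  have hiso : ∀ ⦃a b : K⦄, (a ≅ b) → a ∈ S → b ∈ S := fun a b e ha =>
    isNilpotentHom_of_iso e _ _ (α.natural e.hom) ha
  have hthick : IsThick S := by
    refine ⟨⟨0, ?_⟩, hiso, ?_, ?_, ?_⟩
    · have : α.app (0 : K) = 0 := Subsingleton.elim _ _
      simp [endPow, this]
    · intro a ha n
      induction n using Int.induction_on with
      | zero => exact hiso ((shiftFunctorZero K ℤ).symm.app a) ha
      | succ n ih =>
        refine hiso (((shiftFunctorAdd K (n : ℤ) 1).app a).symm) ?_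
        exact (shift1_nilpotent α _).1 ih
      | pred n ih =>
        have e : (shiftFunctor K (1 : ℤ)).obj ((shiftFunctor K (-(n : ℤ) - 1)).obj a)
            ≅ (shiftFunctor K (-(n : ℤ))).obj a :=
          ((shiftFunctorAdd' K (-(n : ℤ) - 1) 1 (-(n : ℤ)) (by ring)).app a).symm
        have : IsNilpotentHom (α.app ((shiftFunctor K (1 : ℤ)).obj
            ((shiftFunctor K (-(n : ℤ) - 1)).obj a))) :=
          hiso e.symm ih
        exact (shift1_nilpotent α _).2 this
    · intro T hT h1 h2
      obtain ⟨n, hn⟩ := h2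
      obtain ⟨m, hm⟩ := h1
      have hg : T.mor₂ ≫ endPow (α.app T.obj₃) (n + 1) = 0 := by
        rw [endPow_conj T.mor₂ (α.app T.obj₂) (α.app T.obj₃) (α.natural T.mor₂) (n + 1),
          hn, zero_comp]
      obtain ⟨ψ, hψ⟩ := Triangle.yoneda_exact₃ T hT _ hg
      refine ⟨n + 1 + m, ?_⟩
      have hsplit : ∀ p q : ℕ, endPow (α.app T.obj₃) (p + q)
          = endPow (α.app T.obj₃) p ≫ endPow (α.app T.obj₃) q := by
        intro p q
        induction q with
        | zero => simp [endPow]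
        | succ q ih => rw [endPow, ← Nat.add_assoc, endPow, ih, Category.assoc]
      have : endPow (α.app T.obj₃) (n + 1 + (m + 1))
          = T.mor₃ ≫ ψ ≫ endPow (α.app T.obj₃) (m + 1) := by
        rw [hsplit, hψ, Category.assoc]
      rw [show n + 1 + m + 1 = n + 1 + (m + 1) by ring, this,
        endPow_conj ψ (α.app ((shiftFunctor K (1 : ℤ)).obj T.obj₁)) (α.app T.obj₃)
          (α.natural ψ) (m + 1)]
      have hz : endPow (α.app ((shiftFunctor K (1 : ℤ)).obj T.obj₁)) (m + 1) = 0 := by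
        rw [α.shift, ← endPow_map, hm, Functor.map_zero]
      rw [hz, zero_comp, comp_zero]
    · intro a b hab
      obtain ⟨n, hn⟩ := hab
      constructor
      · refine ⟨n, ?_⟩
        have := endPow_conj (biprod.inl : a ⟶ a ⊞ b) (α.app a) (α.app (a ⊞ b))
          (α.natural biprod.inl) (n + 1)
        rw [hn, comp_zero] at this
        calc endPow (α.app a) (n + 1)
            = (endPow (α.app a) (n + 1) ≫ biprod.inl) ≫ biprod.fst := by simp
          _ = 0 := by rw [← this, zero_comp]
      · refine ⟨n, ?_⟩
        have := endPow_conj (biprod.inr : b ⟶ a ⊞ b) (α.app b) (α.app (a ⊞ b))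
          (α.natural biprod.inr) (n + 1)
        rw [hn, comp_zero] at this
        calc endPow (α.app b) (n + 1)
            = (endPow (α.app b) (n + 1) ≫ biprod.inr) ≫ biprod.snd := by simp
          _ = 0 := by rw [← this, zero_comp]
  intro a
  have ha : a ∈ thickSpan D := by rw [hD]; trivial
  exact ha S ⟨hthick, fun d hd => hnil d hd⟩

end Balmer
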